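/- Let Ω ⊆ ℝⁿ be open, let ω ∈ A_∞, and let φ(x,t) = t^{p(x)} where p : Ω → [1,∞] is measurable with 1/p ∈ P^log(Ω). Then φ satisfies (A1)_ω: there exists β₁ ∈ (0,1] such that φ(x,β₁t) ≤ φ(y,t) whenever φ(y,t) ∈ [1, 1/ω(B)], for a.e. x,y ∈ B∩Ω and every ball B with ω(B) ≤ 1. -/

import Mathlib

open MeasureTheory Metric Filter Set
open scoped ENNReal NNReal Topology

noncomputable section

/-- `ℝⁿ` with Lebesgue measure. -/
abbrev Rn (n : ℕ) : Type := EuclideanSpace ℝ (Fin n)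

/-- The `ω`-measure of a set `E`, `ω(E) = ∫_E ω(x) dx`. -/
def wSet {n : ℕ} (ω : Rn n → ℝ≥0∞) (E : Set (Rn n)) : ℝ≥0∞ := ∫⁻ x in E, ω x

/-- A weight: a measurable, a.e. positive and finite, locally integrable function. -/
def IsWeight {n : ℕ} (ω : Rn n → ℝ≥0∞) : Prop :=
  Measurable ω ∧ (∀ᵐ x ∂(volume : Measure (Rn n)), 0 < ω x ∧ ω x < ∞) ∧
    ∀ (z : Rn n) (r : ℝ), 0 < r → wSet ω (ball z r) ≠ ∞

/-- The Muckenhoupt class `A_q`, `1 < q < ∞`: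
`sup_B |B|^{-q} ω(B) (∫_B ω^{-q'/q})^{q-1} < ∞` where `q'/q = 1/(q-1)`. -/
def MuckenhouptAq {n : ℕ} (q : ℝ) (ω : Rn n → ℝ≥0∞) : Prop :=
  IsWeight ω ∧ ∃ C : ℝ≥0∞, C ≠ ∞ ∧ ∀ (z : Rn n) (r : ℝ), 0 < r →
    (volume (ball z r)) ^ (-q) * wSet ω (ball z r) *
      (∫⁻ y in ball z r, (ω y) ^ (-(1 / (q - 1)))) ^ (q - 1) ≤ C

/-- The class `A_∞ = ⋃_{1<q<∞} A_q`. -/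
def MuckenhouptAinfty {n : ℕ} (ω : Rn n → ℝ≥0∞) : Prop :=
  ∃ q : ℝ, 1 < q ∧ MuckenhouptAq q ω

/-- `(aInc)_p`: `t ↦ φ(x,t)/t^p` is almost increasing, uniformly in a.e. `x ∈ Ω`. -/
def AInc {n : ℕ} (Ω : Set (Rn n)) (φ : Rn n → ℝ≥0∞ → ℝ≥0∞) (p : ℝ) : Prop :=
  ∃ a : ℝ≥0, 1 ≤ a ∧ ∀ᵐ x ∂(volume : Measure (Rn n)), x ∈ Ω →
    ∀ s t : ℝ≥0, 0 < s → s < t →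
      φ x s / (s : ℝ≥0∞) ^ p ≤ a * (φ x t / (t : ℝ≥0∞) ^ p)

/-- A weak Φ-function on `Ω`. -/
structure IsWeakPhi {n : ℕ} (Ω : Set (Rn n)) (φ : Rn n → ℝ≥0∞ → ℝ≥0∞) : Prop where
  meas : ∀ f : Rn n → ℝ≥0∞, Measurable f → Measurable fun x => φ x (f x)
  mono : ∀ᵐ x ∂(volume : Measure (Rn n)), x ∈ Ω → Monotone (φ x)
  map_zero : ∀ᵐ x ∂(volume : Measure (Rn n)), x ∈ Ω → φ x 0 = 0
  tendsto_zero : ∀ᵐ x ∂(volume : Measure (Rn n)), x ∈ Ω →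
    Tendsto (fun t : ℝ≥0 => φ x t) (𝓝[>] 0) (𝓝 0)
  tendsto_top : ∀ᵐ x ∂(volume : Measure (Rn n)), x ∈ Ω →
    Tendsto (fun t : ℝ≥0 => φ x t) atTop (𝓝 ∞)
  aInc_one : AInc Ω φ 1

/-- Condition (A0). -/
def A0 {n : ℕ} (Ω : Set (Rn n)) (φ : Rn n → ℝ≥0∞ → ℝ≥0∞) : Prop :=
  ∃ β₀ : ℝ≥0, 0 < β₀ ∧ β₀ ≤ 1 ∧ ∀ᵐ x ∂(volume : Measure (Rn n)), x ∈ Ω →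
    φ x β₀ ≤ 1 ∧ 1 ≤ φ x ((β₀ : ℝ≥0∞)⁻¹)

/-- Condition (A1)_ω. -/
def A1w {n : ℕ} (Ω : Set (Rn n)) (ω : Rn n → ℝ≥0∞) (φ : Rn n → ℝ≥0∞ → ℝ≥0∞) : Prop :=
  ∃ β₁ : ℝ≥0, 0 < β₁ ∧ β₁ ≤ 1 ∧ ∀ (z : Rn n) (r : ℝ), 0 < r → wSet ω (ball z r) ≤ 1 →
    ∀ᵐ x ∂(volume : Measure (Rn n)), ∀ᵐ y ∂(volume : Measure (Rn n)),
      x ∈ ball z r ∩ Ω → y ∈ ball z r ∩ Ω →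
        ∀ t : ℝ≥0, 1 ≤ φ y t → φ y t ≤ (wSet ω (ball z r))⁻¹ →
          φ x (β₁ * t) ≤ φ y t

/-- `h ∈ L¹(Ω,ω) ∩ L^∞(Ω)`, `h ≥ 0`. -/
def MemL1wLinf {n : ℕ} (Ω : Set (Rn n)) (ω : Rn n → ℝ≥0∞) (h : Rn n → ℝ≥0) : Prop :=
  Measurable h ∧ (∫⁻ x in Ω, (h x : ℝ≥0∞) * ω x) ≠ ∞ ∧
    ∃ C : ℝ≥0, ∀ᵐ x ∂(volume : Measure (Rn n)), x ∈ Ω → h x ≤ C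

/-- Condition (A2)_ω. -/
def A2w {n : ℕ} (Ω : Set (Rn n)) (ω : Rn n → ℝ≥0∞) (φ : Rn n → ℝ≥0∞ → ℝ≥0∞) : Prop :=
  ∀ s : ℝ≥0, 0 < s → ∃ β₂ : ℝ≥0, 0 < β₂ ∧ β₂ ≤ 1 ∧ ∃ h : Rn n → ℝ≥0,
    MemL1wLinf Ω ω h ∧
      ∀ᵐ x ∂(volume : Measure (Rn n)), ∀ᵐ y ∂(volume : Measure (Rn n)),
        x ∈ Ω → y ∈ Ω → ∀ t : ℝ≥0, φ y t ≤ s →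
          φ x (β₂ * t) ≤ φ y t + h x + h y

/-- The weighted modular `ρ_φ^ω(g) = ∫_Ω φ(x, g(x)) ω(x) dx` (applied to `g = |f|`). -/
def wModular {n : ℕ} (Ω : Set (Rn n)) (ω : Rn n → ℝ≥0∞) (φ : Rn n → ℝ≥0∞ → ℝ≥0∞)
    (g : Rn n → ℝ≥0∞) : ℝ≥0∞ := ∫⁻ x in Ω, φ x (g x) * ω x

/-- The weighted Luxemburg norm `‖f‖_{L^φ(Ω,ω)}` (applied to `g = |f|`). -/
def wNorm {n : ℕ} (Ω : Set (Rn n)) (ω : Rn n → ℝ≥0∞) (φ : Rn n → ℝ≥0∞ → ℝ≥0∞)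
    (g : Rn n → ℝ≥0∞) : ℝ≥0∞ :=
  ⨅ (lam : ℝ≥0) (_ : 0 < lam)
    (_ : wModular Ω ω φ (fun x => g x / lam) ≤ 1), (lam : ℝ≥0∞)

/-- Membership in the weighted generalized Orlicz space `L^φ(Ω,ω)` (applied to `g = |f|`). -/
def MemLw {n : ℕ} (Ω : Set (Rn n)) (ω : Rn n → ℝ≥0∞) (φ : Rn n → ℝ≥0∞ → ℝ≥0∞)
    (g : Rn n → ℝ≥0∞) : Prop :=
  ∃ lam : ℝ≥0, 0 < lam ∧ wModular Ω ω φ (fun x => g x / lam) ≤ 1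

/-- The Hardy–Littlewood maximal operator (relative to `Ω`), applied to `g = |f|`. -/
def maximal {n : ℕ} (Ω : Set (Rn n)) (g : Rn n → ℝ≥0∞) (x : Rn n) : ℝ≥0∞ :=
  ⨆ (z : Rn n) (r : ℝ) (_ : 0 < r) (_ : x ∈ ball z r),
    (volume (ball z r))⁻¹ * ∫⁻ y in ball z r ∩ Ω, g y

/-- An `x`-independent weak Φ-function. -/
structure IsWeakPhi0 (ψ : ℝ≥0∞ → ℝ≥0∞) : Prop where
  mono : Monotone ψ
  map_zero : ψ 0 = 0
  tendsto_zero : Tendsto (fun t : ℝ≥0 => ψ t) (𝓝[>] 0) (𝓝 0)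
  tendsto_top : Tendsto (fun t : ℝ≥0 => ψ t) atTop (𝓝 ∞)
  aInc_one : ∃ a : ℝ≥0, 1 ≤ a ∧ ∀ s t : ℝ≥0, 0 < s → s < t →
    ψ s / (s : ℝ≥0∞) ≤ a * (ψ t / (t : ℝ≥0∞))

/-- The real-valued reciprocal `1/p(x)` of an exponent `p : Ω → [1,∞]` (with `1/∞ = 0`). -/
def invExp {n : ℕ} (p : Rn n → ℝ≥0∞) (x : Rn n) : ℝ := ((p x)⁻¹).toReal

/-- Local log-Hölder continuity of `g` on `Ω`. -/
def LocallyLogHolder {n : ℕ} (Ω : Set (Rn n)) (g : Rn n → ℝ) : Prop :=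
  ∃ c : ℝ, 0 < c ∧ ∀ x ∈ Ω, ∀ y ∈ Ω,
    |g x - g y| ≤ c / Real.log (Real.exp 1 + 1 / dist x y)

/-- The log-Hölder decay condition for `g` with limit `g∞`. -/
def LogHolderDecay {n : ℕ} (Ω : Set (Rn n)) (g : Rn n → ℝ) (ginf : ℝ) : Prop :=
  ∃ c : ℝ, 0 < c ∧ ∀ x ∈ Ω, |g x - ginf| ≤ c / Real.log (Real.exp 1 + ‖x‖)

/-- `1/p ∈ P^log(Ω)`: local log-Hölder continuity plus log-Hölder decay. -/
def PLog {n : ℕ} (Ω : Set (Rn n)) (p : Rn n → ℝ≥0∞) : Prop :=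
  LocallyLogHolder Ω (invExp p) ∧
    ∃ pinf : ℝ≥0∞, 1 ≤ pinf ∧ LogHolderDecay Ω (invExp p) ((pinf)⁻¹).toReal

/-- The variable exponent Φ-function `φ(x,t) = t^{p(x)}`, with
`t^∞ := ∞·χ_{(1,∞)}(t)`. -/
def varExp {n : ℕ} (p : Rn n → ℝ≥0∞) (x : Rn n) (t : ℝ≥0∞) : ℝ≥0∞ :=
  if p x = ∞ then (if t ≤ 1 then 0 else ∞) else t ^ (p x).toReal

/-- The double phase functional `φ(x,t) = t^p + a(x) t^q`. -/
def doublePhase {n : ℕ} (a : Rn n → ℝ) (p q : ℝ) (x : Rn n) (t : ℝ≥0∞) : ℝ≥0∞ :=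
  t ^ p + ENNReal.ofReal (a x) * t ^ q


section AuxLemmas
open Real

private lemma one_le_logE {u : ℝ} (hu : 0 ≤ u) : 1 ≤ Real.log (Real.exp 1 + u) := by
  have h := Real.log_le_log (Real.exp_pos 1) (by linarith : Real.exp 1 ≤ Real.exp 1 + u)
  rwa [Real.log_exp] at h

private lemma log_two_lt_one : Real.log 2 < 1 := by
  have := Real.log_two_lt_d9; linarith

private lemma log_five_le_two : Real.log 5 ≤ 2 := by
  have h := Real.exp_one_gt_d9
  rw [Real.log_le_iff_le_exp (by norm_num), show (2:ℝ) = 1 + 1 by norm_num, Real.exp_add]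
  nlinarith

private lemma maxlog_le {r : ℝ} (hr : 0 < r) :
    max (Real.log (1/r)) 0 ≤ 2 * Real.log (Real.exp 1 + 1/(2*r)) := by
  have hL : 1 ≤ Real.log (Real.exp 1 + 1/(2*r)) := one_le_logE (by positivity)
  rcases le_or_gt 1 r with h | h
  · have h0 : Real.log (1/r) ≤ 0 := Real.log_nonpos (by positivity) (by
      rw [div_le_one hr]; exact h)
    rw [max_eq_right h0]; linarith
  rcases le_or_gt (1/2 : ℝ) r with h2 | h2
  · have h3 : Real.log (1/r) ≤ Real.log 2 :=
      Real.log_le_log (by positivity) (by rw [div_le_iff₀ hr]; linarith)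
    have h4 := log_two_lt_one
    simp only [max_le_iff]
    exact ⟨by linarith, by linarith⟩
  · have he : (1:ℝ)/r = 2 * (1/(2*r)) := by field_simp
    have hlog : Real.log (1/r) = Real.log 2 + Real.log (1/(2*r)) := by
      rw [he, Real.log_mul two_ne_zero (by positivity)]
    have h3 : Real.log (1/(2*r)) ≤ Real.log (Real.exp 1 + 1/(2*r)) :=
      Real.log_le_log (by positivity) (by linarith [Real.exp_pos 1])
    have h4 := log_two_lt_one
    simp only [max_le_iff]
    exact ⟨by linarith, by linarith⟩

private lemma logEst {c₁ c₂ δ r d m nz : ℝ} (hc₁ : 0 < c₁) (hc₂ : 0 < c₂)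
    (hr : 0 < r) (hδ0 : 0 ≤ δ) (hd0 : 0 < d) (hd : d < 2*r)
    (hnz : 0 ≤ nz) (hm : nz - r ≤ m) (hm0 : 0 ≤ m)
    (hδ1 : δ ≤ c₁ / Real.log (Real.exp 1 + 1/d))
    (hδ2 : δ ≤ 2*c₂ / Real.log (Real.exp 1 + m)) :
    δ * Real.log ((nz + r + 1)/r) ≤ 4*c₁ + 4*c₂ := by
  set L := Real.log (Real.exp 1 + 1/(2*r)) with hLdef
  have hL1 : 1 ≤ L := one_le_logE (by positivity)
  have hL0 : 0 < L := by linarith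
  have hδL : δ ≤ c₁ / L := by
    refine hδ1.trans (div_le_div_of_nonneg_left hc₁.le hL0 ?_)
    refine Real.log_le_log (by positivity) ?_
    have h : 1/(2*r) ≤ 1/d := one_div_le_one_div_of_le hd0 hd.le
    linarith
  have hP := maxlog_le hr
  have hSlog : Real.log ((nz + r + 1)/r) = Real.log (nz + r + 1) - Real.log r :=
    Real.log_div (by positivity) (ne_of_gt hr)
  have hSnn : 0 ≤ Real.log ((nz + r + 1)/r) := Real.log_nonneg (by
    rw [le_div_iff₀ hr]; linarith)
  have hlogr : - Real.log r = Real.log (1/r) := by rw [one_div, Real.log_inv]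
  have hlogr' : - Real.log r ≤ max (Real.log (1/r)) 0 := hlogr ▸ le_max_left _ _
  rcases le_or_gt nz (2*r + 1) with hcase | hcase
  · have hub : Real.log (nz + r + 1) ≤ Real.log 5 + Real.log (max r 1) := by
      rw [← Real.log_mul (by norm_num) (by positivity)]
      refine Real.log_le_log (by positivity) ?_
      rcases le_total r 1 with h | h
      · rw [max_eq_right h]; linarith
      · rw [max_eq_left h]; linarith
    have hmax : Real.log (max r 1) - Real.log r ≤ max (Real.log (1/r)) 0 := by
      rcases le_total r 1 with h | h
      · rw [max_eq_right h, Real.log_one]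
        simpa using hlogr'
      · rw [max_eq_left h, sub_self]
        exact le_max_right _ _
    have h5 := log_five_le_two
    have hS4 : Real.log ((nz + r + 1)/r) ≤ 4*L := by
      rw [hSlog]; linarith
    calc δ * Real.log ((nz + r + 1)/r) ≤ (c₁/L) * (4*L) :=
          mul_le_mul hδL hS4 hSnn (by positivity)
      _ = 4*c₁ := by field_simp
      _ ≤ 4*c₁ + 4*c₂ := by linarith
  · have hnz1 : 1 < nz := by linarith
    have hub : Real.log (nz + r + 1) ≤ Real.log 2 + Real.log nz := by
      rw [← Real.log_mul two_ne_zero (by positivity)]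
      exact Real.log_le_log (by positivity) (by linarith)
    set Lm := Real.log (Real.exp 1 + m) with hLm
    have hLm1 : 1 ≤ Lm := one_le_logE hm0
    have hLm0 : 0 < Lm := by linarith
    have hlognz : Real.log nz ≤ 2 * Lm := by
      have h1 : Real.log nz = Real.log 2 + Real.log (nz/2) := by
        rw [← Real.log_mul two_ne_zero (by positivity)]
        congr 1
        ring
      have h2 : Real.log (nz/2) ≤ Lm :=
        Real.log_le_log (by positivity) (by linarith [Real.exp_pos 1])
      have := log_two_lt_one
      linarith
    have hS : Real.log ((nz + r + 1)/r) ≤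
        (Real.log 2 + max (Real.log (1/r)) 0) + Real.log nz := by
      rw [hSlog]; linarith
    have hpart1 : δ * (Real.log 2 + max (Real.log (1/r)) 0) ≤ 3*c₁ := by
      have hub2 : Real.log 2 + max (Real.log (1/r)) 0 ≤ 3*L := by
        have := log_two_lt_one; linarith
      have hnn : 0 ≤ Real.log 2 + max (Real.log (1/r)) 0 := by
        have h1 := Real.log_pos (by norm_num : (1:ℝ) < 2)
        have h2 := le_max_right (Real.log (1/r)) 0
        linarith
      calc δ * (Real.log 2 + max (Real.log (1/r)) 0) ≤ (c₁/L) * (3*L) :=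
            mul_le_mul hδL hub2 hnn (by positivity)
        _ = 3*c₁ := by field_simp
    have hpart2 : δ * Real.log nz ≤ 4*c₂ := by
      have hnn : 0 ≤ Real.log nz := Real.log_nonneg hnz1.le
      calc δ * Real.log nz ≤ (2*c₂/Lm) * (2*Lm) :=
            mul_le_mul hδ2 hlognz hnn (by positivity)
        _ = 4*c₂ := by field_simp; ring
    have hfin : δ * Real.log ((nz + r + 1)/r) ≤
        δ * ((Real.log 2 + max (Real.log (1/r)) 0) + Real.log nz) :=
      mul_le_mul_of_nonneg_left hS hδ0
    rw [mul_add] at hfin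
    linarith

private lemma wSet_ball_pos {n : ℕ} {ω : Rn n → ℝ≥0∞} (hmeas : Measurable ω)
    (hpos : ∀ᵐ x ∂(volume : Measure (Rn n)), 0 < ω x ∧ ω x < ∞)
    (z : Rn n) (r : ℝ) (hr : 0 < r) : 0 < wSet ω (ball z r) := by
  rw [pos_iff_ne_zero]
  intro h0
  have h0' : ω =ᵐ[(volume : Measure (Rn n)).restrict (ball z r)] 0 :=
    (lintegral_eq_zero_iff hmeas).1 h0
  have h1 : ∀ᵐ x ∂((volume : Measure (Rn n)).restrict (ball z r)), 0 < ω x :=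
    ae_restrict_of_ae (hpos.mono fun x hx => hx.1)
  have h2 : ∀ᵐ x ∂((volume : Measure (Rn n)).restrict (ball z r)), False := by
    filter_upwards [h0', h1] with x hx1 hx2
    simp only [Pi.zero_apply] at hx1
    rw [hx1] at hx2
    exact lt_irrefl _ hx2
  rw [ae_iff] at h2
  simp only [not_false_eq_true, setOf_true, Measure.restrict_apply_univ] at h2
  exact (measure_ball_pos volume z hr).ne' h2

private lemma ball_w_lower {n : ℕ} {ω : Rn n → ℝ≥0∞} {q : ℝ} (hq : 1 < q)
    (hmeas : Measurable ω)
    (hpos : ∀ᵐ x ∂(volume : Measure (Rn n)), 0 < ω x ∧ ω x < ∞)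
    {C : ℝ≥0∞}
    (hAq : ∀ (z : Rn n) (r : ℝ), 0 < r →
      (volume (ball z r)) ^ (-q) * wSet ω (ball z r) *
        (∫⁻ y in ball z r, (ω y) ^ (-(1 / (q - 1)))) ^ (q - 1) ≤ C)
    (z : Rn n) (r R : ℝ) (hr : 0 < r) (hrR : r ≤ R) :
    (volume (ball z r)) ^ q * wSet ω (ball z R) ≤
      C * (volume (ball z R)) ^ q * wSet ω (ball z r) := by
  have hq0 : (0:ℝ) < q := lt_trans one_pos hq
  have hq1 : (0:ℝ) < q - 1 := sub_pos.2 hq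
  have hR : 0 < R := lt_of_lt_of_le hr hrR
  have hV0 : volume (ball z R) ≠ 0 := (measure_ball_pos volume z hR).ne'
  have hVt : volume (ball z R) ≠ ∞ := measure_ball_lt_top.ne
  set I := ∫⁻ y in ball z R, (ω y) ^ (-(1 / (q - 1))) with hI
  have hstep1 : wSet ω (ball z R) * I ^ (q-1) ≤ C * (volume (ball z R)) ^ q := by
    have hv : volume (ball z R) ^ (-q) * volume (ball z R) ^ q = 1 := by
      rw [← ENNReal.rpow_add _ _ hV0 hVt, neg_add_cancel, ENNReal.rpow_zero]
    calc wSet ω (ball z R) * I ^ (q-1)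
        = (volume (ball z R) ^ (-q) * volume (ball z R) ^ q) *
            (wSet ω (ball z R) * I ^ (q-1)) := by rw [hv, one_mul]
      _ = (volume (ball z R) ^ (-q) * wSet ω (ball z R) * I ^ (q-1)) *
            volume (ball z R) ^ q := by ring
      _ ≤ C * volume (ball z R) ^ q := mul_le_mul_left (hAq z R hR) _
  have hpq : q.HolderConjugate (q/(q-1)) := Real.HolderConjugate.conjExponent hq
  have hω1q : AEMeasurable (fun x => ω x ^ (1/q))
      ((volume : Measure (Rn n)).restrict (ball z r)) := (hmeas.pow_const _).aemeasurable
  have hω2q : AEMeasurable (fun x => ω x ^ (-(1/q)))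
      ((volume : Measure (Rn n)).restrict (ball z r)) := (hmeas.pow_const _).aemeasurable
  have hone : volume (ball z r) = ∫⁻ x in ball z r,
      ((fun x => ω x ^ (1/q)) * fun x => ω x ^ (-(1/q))) x := by
    have h1 : ∀ᵐ x ∂((volume : Measure (Rn n)).restrict (ball z r)),
        ((fun x => ω x ^ (1/q)) * fun x => ω x ^ (-(1/q))) x = 1 := by
      refine ae_restrict_of_ae (hpos.mono fun x hx => ?_)
      simp only [Pi.mul_apply]
      rw [← ENNReal.rpow_add _ _ hx.1.ne' hx.2.ne, add_neg_cancel, ENNReal.rpow_zero]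
    rw [lintegral_congr_ae h1, setLIntegral_one]
  have holder := ENNReal.lintegral_mul_le_Lp_mul_Lq
      ((volume : Measure (Rn n)).restrict (ball z r)) hpq hω1q hω2q
  have hA : (∫⁻ x in ball z r, ((fun x => ω x ^ (1/q)) x) ^ q) = wSet ω (ball z r) := by
    refine lintegral_congr fun x => ?_
    rw [← ENNReal.rpow_mul, one_div_mul_cancel hq0.ne', ENNReal.rpow_one]
  have hB : (∫⁻ x in ball z r, ((fun x => ω x ^ (-(1/q))) x) ^ (q/(q-1)))
      = ∫⁻ x in ball z r, (ω x) ^ (-(1/(q-1))) := by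
    refine lintegral_congr fun x => ?_
    rw [← ENNReal.rpow_mul]
    congr 1
    field_simp
  have hmono : (∫⁻ x in ball z r, (ω x) ^ (-(1/(q-1)))) ≤ I :=
    lintegral_mono_set (ball_subset_ball hrR)
  have hqq' : (0:ℝ) ≤ 1/(q/(q-1)) := by positivity
  have key : volume (ball z r) ≤ (wSet ω (ball z r)) ^ (1/q) * I ^ (1/(q/(q-1))) := by
    rw [hone]
    refine holder.trans ?_
    rw [hA, hB]
    exact mul_le_mul_right (ENNReal.rpow_le_rpow hmono hqq') _
  have key2 : (volume (ball z r)) ^ q ≤ wSet ω (ball z r) * I ^ (q-1) := by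
    have h := ENNReal.rpow_le_rpow key hq0.le
    rwa [ENNReal.mul_rpow_of_nonneg _ _ hq0.le, ← ENNReal.rpow_mul, ← ENNReal.rpow_mul,
      one_div_mul_cancel hq0.ne', ENNReal.rpow_one,
      show 1/(q/(q-1)) * q = q - 1 by rw [one_div_div]; field_simp] at h
  calc (volume (ball z r)) ^ q * wSet ω (ball z R)
      ≤ (wSet ω (ball z r) * I ^ (q-1)) * wSet ω (ball z R) := mul_le_mul_left key2 _
    _ = (wSet ω (ball z R) * I ^ (q-1)) * wSet ω (ball z r) := by ring
    _ ≤ (C * (volume (ball z R)) ^ q) * wSet ω (ball z r) := mul_le_mul_left hstep1 _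
    _ = C * (volume (ball z R)) ^ q * wSet ω (ball z r) := by ring

end AuxLemmas

set_option maxHeartbeats 2000000 in
/-- The variable exponent functional satisfies (A1)_ω. -/
theorem varExp_A1w
    (n : ℕ) (Ω : Set (Rn n)) (hΩ : IsOpen Ω)
    (ω : Rn n → ℝ≥0∞) (hω : MuckenhouptAinfty ω)
    (p : Rn n → ℝ≥0∞) (hpm : Measurable p) (hp1 : ∀ x ∈ Ω, 1 ≤ p x)
    (hlog : PLog Ω p) :
    A1w Ω ω (varExp p) := by
  obtain ⟨q, hq1, ⟨hωmeas, hωpos, hωfin⟩, C, hCt, hAq⟩ := hω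
  obtain ⟨⟨c₁, hc₁, hloc⟩, pinf, hpinf1, c₂, hc₂, hdecay⟩ := hlog
  have hq0 : (0:ℝ) < q := lt_trans one_pos hq1
  set c₀ : ℝ≥0∞ := wSet ω (ball (0 : Rn n) 1) with hc₀def
  have hc₀pos : 0 < c₀ := wSet_ball_pos hωmeas hωpos 0 1 one_pos
  have hc₀fin : c₀ ≠ ∞ := hωfin 0 1 one_pos
  set K : ℝ := c₀.toReal / (C.toReal + 1) with hKdef
  have hK : 0 < K := div_pos (ENNReal.toReal_pos hc₀pos.ne' hc₀fin) (by positivity)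
  set M : ℝ := max 0 (-Real.log K) + ((n:ℝ)*q) * (4*c₁ + 4*c₂) with hMdef
  have hM0 : 0 ≤ M := by
    have h1 : 0 ≤ ((n:ℝ)*q) * (4*c₁ + 4*c₂) := by positivity
    have h2 := le_max_left (0:ℝ) (-Real.log K)
    rw [hMdef]; linarith
  set β : ℝ≥0 := ⟨Real.exp (-M), (Real.exp_pos _).le⟩ with hβdef
  have hβcoe : (β:ℝ) = Real.exp (-M) := rfl
  refine ⟨β, ?_, ?_, ?_⟩
  · rw [← NNReal.coe_pos, hβcoe]; exact Real.exp_pos _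
  · rw [← NNReal.coe_le_coe, hβcoe, NNReal.coe_one]
    exact Real.exp_le_one_iff.2 (by linarith)
  intro z r hr hB1
  refine Filter.Eventually.of_forall fun x => Filter.Eventually.of_forall fun y => ?_
  intro hx hy t h1t htB
  have hxΩ : x ∈ Ω := hx.2
  have hyΩ : y ∈ Ω := hy.2
  have hxB : x ∈ ball z r := hx.1
  have hyB : y ∈ ball z r := hy.1
  have hW0 : 0 < wSet ω (ball z r) := wSet_ball_pos hωmeas hωpos z r hr
  have hWt : wSet ω (ball z r) ≠ ∞ := hωfin z r hr
  set w : ℝ := (wSet ω (ball z r)).toReal with hwdef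
  have hw0 : 0 < w := ENNReal.toReal_pos hW0.ne' hWt
  -- lower bound for w
  set R : ℝ := ‖z‖ + r + 1 with hRdef
  have hR0 : 0 < R := by rw [hRdef]; positivity
  have hrR : r ≤ R := by rw [hRdef]; linarith [norm_nonneg z]
  have hsub1 : ball (0 : Rn n) 1 ⊆ ball z R := by
    intro u hu
    rw [mem_ball] at hu ⊢
    have hdz : dist (0 : Rn n) z = ‖z‖ := by rw [dist_comm, dist_zero_right]
    calc dist u z ≤ dist u 0 + dist (0 : Rn n) z := dist_triangle _ _ _
      _ < 1 + ‖z‖ := by rw [hdz]; rw [dist_zero_right] at hu ⊢; linarith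
      _ ≤ R := by rw [hRdef]; linarith
  have hc₀R : c₀ ≤ wSet ω (ball z R) := lintegral_mono_set hsub1
  have hwlow : K * (r/R) ^ ((n:ℝ)*q) ≤ w := by
    have hcomp := ball_w_lower hq1 hωmeas hωpos hAq z r R hr hrR
    rcases Nat.eq_zero_or_pos n with hn | hn
    · subst hn
      have hball : ball (0 : Rn 0) 1 ⊆ ball z r := by
        intro u _
        rw [mem_ball, Subsingleton.elim u z, dist_self]
        exact hr
      have hle : c₀ ≤ wSet ω (ball z r) := lintegral_mono_set hball
      have hle' : c₀.toReal ≤ w := ENNReal.toReal_mono hWt hle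
      have hKle : K ≤ c₀.toReal := by
        rw [hKdef]
        exact div_le_self ENNReal.toReal_nonneg (by linarith [ENNReal.toReal_nonneg (a := C)])
      rw [show ((0:ℕ):ℝ)*q = 0 by simp, Real.rpow_zero, mul_one]
      linarith
    · have : Nontrivial (Rn n) := Module.nontrivial_of_finrank_pos (R := ℝ)
        (by rw [finrank_euclideanSpace_fin]; exact hn)
      have hvol : ∀ ρ : ℝ, 0 ≤ ρ →
          volume (ball z ρ) = ENNReal.ofReal (ρ^n) * volume (ball (0 : Rn n) 1) := by
        intro ρ hρ
        rw [Measure.addHaar_ball _ _ hρ, finrank_euclideanSpace_fin]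
      set v1 : ℝ≥0∞ := volume (ball (0 : Rn n) 1) with hv1def
      have hv10 : v1 ≠ 0 := (measure_ball_pos volume _ one_pos).ne'
      have hv1t : v1 ≠ ∞ := measure_ball_lt_top.ne
      have hchain : (ENNReal.ofReal (r^n) * v1)^q * c₀ ≤
          C * (ENNReal.ofReal (R^n) * v1)^q * wSet ω (ball z r) := by
        calc (ENNReal.ofReal (r^n) * v1)^q * c₀
            = (volume (ball z r))^q * c₀ := by rw [hvol r hr.le]
          _ ≤ (volume (ball z r))^q * wSet ω (ball z R) := mul_le_mul_right hc₀R _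
          _ ≤ C * (volume (ball z R))^q * wSet ω (ball z r) := hcomp
          _ = C * (ENNReal.ofReal (R^n) * v1)^q * wSet ω (ball z r) := by rw [hvol R hR0.le]
      have hfin : C * (ENNReal.ofReal (R^n) * v1)^q * wSet ω (ball z r) ≠ ∞ :=
        ENNReal.mul_ne_top (ENNReal.mul_ne_top hCt (ENNReal.rpow_ne_top_of_nonneg hq0.le
          (ENNReal.mul_ne_top ENNReal.ofReal_ne_top hv1t))) hWt
      have hreal := ENNReal.toReal_mono hfin hchain
      rw [ENNReal.toReal_mul, ENNReal.toReal_mul, ENNReal.toReal_mul,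
        ← ENNReal.toReal_rpow, ← ENNReal.toReal_rpow, ENNReal.toReal_mul, ENNReal.toReal_mul,
        ENNReal.toReal_ofReal (by positivity), ENNReal.toReal_ofReal (by positivity)] at hreal
      set v1r := v1.toReal with hv1rdef
      have hv1r0 : 0 < v1r := ENNReal.toReal_pos hv10 hv1t
      rw [Real.mul_rpow (by positivity) hv1r0.le, Real.mul_rpow (by positivity) hv1r0.le]
        at hreal
      have hv1rq : 0 < v1r ^ q := by positivity
      have hRnq : 0 < (R^n)^q := by positivity
      have h5 : (r^n)^q * c₀.toReal ≤ C.toReal * (R^n)^q * w := by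
        have h6 : ((r^n)^q * c₀.toReal) * v1r^q ≤ (C.toReal * (R^n)^q * w) * v1r^q := by
          calc ((r^n)^q * c₀.toReal) * v1r^q = (r^n)^q * v1r^q * c₀.toReal := by ring
            _ ≤ C.toReal * ((R^n)^q * v1r^q) * w := hreal
            _ = (C.toReal * (R^n)^q * w) * v1r^q := by ring
        exact le_of_mul_le_mul_right h6 hv1rq
      have hsq : ((r/R) ^ ((n:ℝ)*q)) = (r^n)^q / (R^n)^q := by
        rw [Real.rpow_mul (by positivity), Real.rpow_natCast,
          div_pow, Real.div_rpow (by positivity) (by positivity)]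
      rw [hsq, hKdef, div_mul_div_comm, div_le_iff₀ (by positivity)]
      nlinarith [h5, mul_nonneg hw0.le hRnq.le, ENNReal.toReal_nonneg (a := C),
        mul_nonneg (mul_nonneg hw0.le hRnq.le) (ENNReal.toReal_nonneg (a := C))]
  have hlogw : -Real.log w ≤ -Real.log K + ((n:ℝ)*q) * Real.log (R/r) := by
    have hsR : 0 < r/R := by positivity
    have h1 : Real.log (K * (r/R) ^ ((n:ℝ)*q)) ≤ Real.log w :=
      Real.log_le_log (by positivity) hwlow
    rw [Real.log_mul (ne_of_gt hK) (by positivity), Real.log_rpow hsR] at h1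
    have h2 : Real.log (r/R) = -Real.log (R/r) := by
      rw [← Real.log_inv, inv_div]
    rw [h2] at h1
    nlinarith [h1]
  -- p y is finite
  have hpyt : p y ≠ ∞ := by
    intro hinf
    simp only [varExp, if_pos hinf] at h1t htB
    by_cases hle : (t : ℝ≥0∞) ≤ 1
    · rw [if_pos hle] at h1t
      exact absurd h1t (by norm_num)
    · rw [if_neg hle] at htB
      rw [top_le_iff, ENNReal.inv_eq_top] at htB
      exact hW0.ne' htB
  simp only [varExp, if_neg hpyt] at h1t htB
  set py : ℝ := (p y).toReal with hpydef
  have hpy1 : 1 ≤ py := by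
    have h := ENNReal.toReal_mono hpyt (hp1 y hyΩ)
    simpa using h
  have hpy0 : 0 < py := lt_of_lt_of_le one_pos hpy1
  have ht1 : 1 ≤ (t:ℝ) := by
    by_contra hlt
    push_neg at hlt
    have ht' : t < 1 := by exact_mod_cast hlt
    have htlt : (t : ℝ≥0∞) < 1 := by exact_mod_cast ht'
    exact absurd h1t (not_le.2 (ENNReal.rpow_lt_one htlt hpy0))
  have ht0 : 0 < (t:ℝ) := lt_of_lt_of_le one_pos ht1
  have hwt : w * (t:ℝ)^py ≤ 1 := by
    have h2 : (t : ℝ≥0∞)^py * wSet ω (ball z r) ≤ 1 := ENNReal.le_inv_iff_mul_le.1 htB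
    have h3 := ENNReal.toReal_mono (by simp) h2
    rw [ENNReal.toReal_mul, ENNReal.toReal_one, ← ENNReal.toReal_rpow,
      ENNReal.coe_toReal] at h3
    nlinarith [h3]
  set a : ℝ := invExp p y with hadef
  set b : ℝ := invExp p x with hbdef
  have ha : a = 1/py := by
    rw [hadef, invExp, ENNReal.toReal_inv, one_div]
  have ha0 : 0 < a := by rw [ha]; positivity
  have ha1 : a ≤ 1 := by
    rw [ha, div_le_one hpy0]; exact hpy1
  have hb0 : 0 ≤ b := ENNReal.toReal_nonneg
  set δ : ℝ := max (a - b) 0 with hδdef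
  have hδ0 : 0 ≤ δ := le_max_right _ _
  have hδle1 : δ ≤ 1 := max_le (by linarith) (by norm_num)
  have hδabs : δ ≤ |invExp p x - invExp p y| := by
    rw [abs_sub_comm]
    exact max_le (le_abs_self _) (abs_nonneg _)
  have hlogKey : δ * (-Real.log w) ≤ M := by
    by_cases hxy : x = y
    · have hab : a = b := by rw [hadef, hbdef, hxy]
      have hz : δ = 0 := by rw [hδdef, hab, sub_self, max_self]
      rw [hz, zero_mul]; exact hM0
    · have hd0 : 0 < dist x y := dist_pos.2 hxy
      have hd2r : dist x y < 2*r := by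
        have h1 : dist x z < r := mem_ball.1 hxB
        have h2 : dist y z < r := mem_ball.1 hyB
        calc dist x y ≤ dist x z + dist z y := dist_triangle _ _ _
          _ = dist x z + dist y z := by rw [dist_comm z y]
          _ < 2*r := by linarith
      have hnx : ‖z‖ - r ≤ ‖x‖ := by
        have h1 : ‖z‖ - ‖x‖ ≤ dist x z := by
          rw [dist_comm, dist_eq_norm]
          exact norm_sub_norm_le z x
        linarith [mem_ball.1 hxB]
      have hny : ‖z‖ - r ≤ ‖y‖ := by
        have h1 : ‖z‖ - ‖y‖ ≤ dist y z := by
          rw [dist_comm, dist_eq_norm]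
          exact norm_sub_norm_le z y
        linarith [mem_ball.1 hyB]
      have hmm : ‖z‖ - r ≤ min ‖x‖ ‖y‖ := le_min hnx hny
      have hm0 : 0 ≤ min ‖x‖ ‖y‖ := le_min (norm_nonneg _) (norm_nonneg _)
      have hδ1b : δ ≤ c₁ / Real.log (Real.exp 1 + 1/dist x y) :=
        hδabs.trans (hloc x hxΩ y hyΩ)
      have hδ2b : δ ≤ 2*c₂ / Real.log (Real.exp 1 + min ‖x‖ ‖y‖) := by
        have hx' := hdecay x hxΩ
        have hy' := hdecay y hyΩ
        have hLm : (0:ℝ) < Real.log (Real.exp 1 + min ‖x‖ ‖y‖) :=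
          lt_of_lt_of_le one_pos (one_le_logE hm0)
        have h1 : c₂ / Real.log (Real.exp 1 + ‖x‖) ≤
            c₂ / Real.log (Real.exp 1 + min ‖x‖ ‖y‖) := by
          refine div_le_div_of_nonneg_left hc₂.le hLm ?_
          exact Real.log_le_log (by positivity) (by linarith [min_le_left ‖x‖ ‖y‖])
        have h2 : c₂ / Real.log (Real.exp 1 + ‖y‖) ≤
            c₂ / Real.log (Real.exp 1 + min ‖x‖ ‖y‖) := by
          refine div_le_div_of_nonneg_left hc₂.le hLm ?_
          exact Real.log_le_log (by positivity) (by linarith [min_le_right ‖x‖ ‖y‖])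
        have htri : |invExp p x - invExp p y| ≤
            |invExp p x - ((pinf)⁻¹).toReal| + |invExp p y - ((pinf)⁻¹).toReal| := by
          calc |invExp p x - invExp p y|
              ≤ |invExp p x - ((pinf)⁻¹).toReal| + |((pinf)⁻¹).toReal - invExp p y| :=
                abs_sub_le _ _ _
            _ = |invExp p x - ((pinf)⁻¹).toReal| + |invExp p y - ((pinf)⁻¹).toReal| := by
                rw [abs_sub_comm ((pinf)⁻¹).toReal]
        have hsum : 2*c₂ / Real.log (Real.exp 1 + min ‖x‖ ‖y‖) =
            c₂ / Real.log (Real.exp 1 + min ‖x‖ ‖y‖) +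
            c₂ / Real.log (Real.exp 1 + min ‖x‖ ‖y‖) := by ring
        rw [hsum]
        calc δ ≤ |invExp p x - invExp p y| := hδabs
          _ ≤ |invExp p x - ((pinf)⁻¹).toReal| + |invExp p y - ((pinf)⁻¹).toReal| := htri
          _ ≤ c₂ / Real.log (Real.exp 1 + ‖x‖) + c₂ / Real.log (Real.exp 1 + ‖y‖) :=
              add_le_add hx' hy'
          _ ≤ _ := add_le_add h1 h2
      have hlogS : δ * Real.log ((‖z‖ + r + 1)/r) ≤ 4*c₁ + 4*c₂ :=
        logEst hc₁ hc₂ hr hδ0 hd0 hd2r (norm_nonneg z) hmm hm0 hδ1b hδ2b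
      have hRr : (‖z‖ + r + 1)/r = R/r := by rw [hRdef]
      rw [hRr] at hlogS
      have h1 : δ * (-Real.log w) ≤ δ * (-Real.log K + ((n:ℝ)*q) * Real.log (R/r)) :=
        mul_le_mul_of_nonneg_left hlogw hδ0
      have h2 : δ * (-Real.log K) ≤ max 0 (-Real.log K) := by
        rcases le_total 0 (-Real.log K) with h | h
        · calc δ * (-Real.log K) ≤ 1 * (-Real.log K) := mul_le_mul_of_nonneg_right hδle1 h
            _ = -Real.log K := one_mul _
            _ ≤ max 0 (-Real.log K) := le_max_right _ _
        · calc δ * (-Real.log K) ≤ 0 := mul_nonpos_of_nonneg_of_nonpos hδ0 h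
            _ ≤ max 0 (-Real.log K) := le_max_left _ _
      have h3 : δ * (((n:ℝ)*q) * Real.log (R/r)) ≤ ((n:ℝ)*q) * (4*c₁ + 4*c₂) := by
        have hnq : (0:ℝ) ≤ (n:ℝ)*q := by positivity
        calc δ * (((n:ℝ)*q) * Real.log (R/r)) = ((n:ℝ)*q) * (δ * Real.log (R/r)) := by ring
          _ ≤ ((n:ℝ)*q) * (4*c₁ + 4*c₂) := mul_le_mul_of_nonneg_left hlogS hnq
      rw [mul_add] at h1
      rw [hMdef]
      linarith
  have hβw : (β:ℝ) ≤ w ^ δ := by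
    rw [hβcoe, Real.rpow_def_of_pos hw0]
    apply Real.exp_le_exp.2
    nlinarith [hlogKey]
  by_cases hpx : p x = ∞
  · simp only [varExp, if_pos hpx, if_neg hpyt]
    have hb : b = 0 := by
      rw [hbdef, invExp, hpx]
      simp
    have hδa : δ = a := by rw [hδdef, hb, sub_zero, max_eq_left ha0.le]
    have hβa : (β:ℝ) ≤ w ^ a := by rw [← hδa]; exact hβw
    have hta : (t:ℝ) ≤ w ^ (-a) := by
      have h2 : (t:ℝ)^py ≤ w⁻¹ := by
        rw [← one_div, le_div_iff₀ hw0]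
        nlinarith [hwt]
      have h3 : (t:ℝ) = ((t:ℝ)^py)^(1/py) := by
        rw [← Real.rpow_mul ht0.le, mul_one_div, div_self hpy0.ne', Real.rpow_one]
      calc (t:ℝ) = ((t:ℝ)^py)^(1/py) := h3
        _ ≤ (w⁻¹)^(1/py) := Real.rpow_le_rpow (by positivity) h2 (by positivity)
        _ = w ^ (-a) := by
            rw [← Real.rpow_neg_one w, ← Real.rpow_mul hw0.le, ha]
            norm_num
    have hmul : (β:ℝ) * (t:ℝ) ≤ 1 := by
      calc (β:ℝ) * (t:ℝ) ≤ w^a * w^(-a) :=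
            mul_le_mul hβa hta (by positivity) (by positivity)
        _ = 1 := by rw [← Real.rpow_add hw0]; simp
    have hle1 : ((β:ℝ≥0∞) * (t:ℝ≥0∞)) ≤ 1 := by
      rw [← ENNReal.coe_mul, ← ENNReal.coe_one, ENNReal.coe_le_coe, ← NNReal.coe_le_coe,
        NNReal.coe_mul, NNReal.coe_one]
      exact hmul
    rw [if_pos hle1]
    exact zero_le
  · simp only [varExp, if_neg hpx, if_neg hpyt]
    set px : ℝ := (p x).toReal with hpxdef
    have hpx1 : 1 ≤ px := by
      have h := ENNReal.toReal_mono hpx (hp1 x hxΩ)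
      simpa using h
    have hpx0 : 0 < px := lt_of_lt_of_le one_pos hpx1
    have hbpx : b = 1/px := by
      rw [hbdef, invExp, ENNReal.toReal_inv, one_div]
    have hb0' : 0 < b := by rw [hbpx]; positivity
    rw [← ENNReal.coe_mul, ← ENNReal.coe_rpow_of_nonneg _ hpx0.le,
      ← ENNReal.coe_rpow_of_nonneg _ hpy0.le, ENNReal.coe_le_coe, ← NNReal.coe_le_coe,
      NNReal.coe_rpow, NNReal.coe_rpow, NNReal.coe_mul]
    rcases le_or_gt a b with hab | hba
    · have hβ1' : (β:ℝ) ≤ 1 := by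
        rw [hβcoe]
        exact Real.exp_le_one_iff.2 (by linarith)
      have hpxy : px ≤ py := by
        rw [ha, hbpx, div_le_div_iff₀ hpy0 hpx0] at hab
        linarith
      calc ((β:ℝ) * (t:ℝ))^px ≤ ((t:ℝ))^px :=
            Real.rpow_le_rpow (by positivity) (by nlinarith) hpx0.le
        _ ≤ (t:ℝ)^py := Real.rpow_le_rpow_of_exponent_le ht1 hpxy
    · have hδab : δ = a - b := max_eq_left (by linarith)
      have he₁0 : 0 < (a-b)*px := mul_pos (by linarith) hpx0
      have h1 : ((β:ℝ) * (t:ℝ))^px ≤ (w^(a-b) * (t:ℝ))^px := by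
        refine Real.rpow_le_rpow (by positivity) ?_ hpx0.le
        refine mul_le_mul_of_nonneg_right ?_ ht0.le
        rw [← hδab]; exact hβw
      have h2 : (w^(a-b) * (t:ℝ))^px = w^((a-b)*px) * (t:ℝ)^px := by
        rw [Real.mul_rpow (by positivity) ht0.le, ← Real.rpow_mul hw0.le]
      have h3 : w^((a-b)*px) * ((t:ℝ)^py)^((a-b)*px) ≤ 1 := by
        rw [← Real.mul_rpow hw0.le (by positivity)]
        exact Real.rpow_le_one (by positivity) hwt he₁0.le
      have h4 : w^((a-b)*px) ≤ ((t:ℝ))^(-(py*((a-b)*px))) := by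
        have hY : 0 < ((t:ℝ)^py)^((a-b)*px) := by positivity
        have hEq : (t:ℝ)^(-(py*((a-b)*px))) = (((t:ℝ)^py)^((a-b)*px))⁻¹ := by
          rw [Real.rpow_neg ht0.le, Real.rpow_mul ht0.le]
        rw [hEq, inv_eq_one_div, le_div_iff₀ hY]
        exact h3
      have hexp : -(py*((a-b)*px)) + px = py := by
        rw [ha, hbpx]
        field_simp
        ring
      calc ((β:ℝ) * (t:ℝ))^px ≤ w^((a-b)*px) * (t:ℝ)^px := h1.trans_eq h2
        _ ≤ (t:ℝ)^(-(py*((a-b)*px))) * (t:ℝ)^px :=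
            mul_le_mul_of_nonneg_right h4 (by positivity)
        _ = (t:ℝ)^(-(py*((a-b)*px)) + px) := (Real.rpow_add ht0 _ _).symm
        _ = (t:ℝ)^py := by rw [hexp]
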